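/- arXiv:2502.21071 — 2 statements merged into one kernel-verified Lean document; each statement's English description precedes it below -/
import Mathlib

section
/- Let (X, μ) be a σ-finite measure space, 1 < p < ∞ with conjugate p'. There is a constant C_p > 0 (depending only on p) such that for every measurable f : X → ℂ, sup{μ(E)^{−1/p'} ∫_E |f| dμ : E measurable, 0 < μ(E) < ∞} ≤ C_p · sup_{y>0} y · μ{x : |f(x)| > y}^{1/p}, and conversely sup_{y>0} y · μ{x : |f(x)| > y}^{1/p} ≤ sup{μ(E)^{−1/p'} ∫_E |f| dμ : E measurable, 0 < μ(E) < ∞}. -/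
open MeasureTheory Set

theorem stmt4 {X : Type*} [MeasurableSpace X] (μ : Measure X) [SigmaFinite μ]
    (p p' : ℝ) (hp : 1 < p) (hp' : 1/p + 1/p' = 1) :
    ∃ C : ℝ, 0 < C ∧ ∀ f : X → ℂ, Measurable f →
      (⨆ (E : Set X) (_ : MeasurableSet E ∧ 0 < μ E ∧ μ E < ⊤),
          (μ E) ^ (-(1/p')) * ∫⁻ x in E, ENNReal.ofReal ‖f x‖ ∂μ) ≤
        ENNReal.ofReal C *
          (⨆ (y : ℝ) (_ : 0 < y), ENNReal.ofReal y * (μ {x | y < ‖f x‖}) ^ (1/p)) ∧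
      (⨆ (y : ℝ) (_ : 0 < y), ENNReal.ofReal y * (μ {x | y < ‖f x‖}) ^ (1/p)) ≤
        ⨆ (E : Set X) (_ : MeasurableSet E ∧ 0 < μ E ∧ μ E < ⊤),
          (μ E) ^ (-(1/p')) * ∫⁻ x in E, ENNReal.ofReal ‖f x‖ ∂μ := by
  have hp0 : (0:ℝ) < p := by linarith
  have hpinv : 0 < 1/p := by positivity
  have hpinv1 : 1/p < 1 := by rw [div_lt_one hp0]; linarith
  have hp'eq : 1/p' = 1 - 1/p := by linarith
  have hp'pos : 0 < 1/p' := by rw [hp'eq]; linarith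
  have hC : (0:ℝ) < p/(p-1) := by apply div_pos <;> linarith
  refine ⟨p/(p-1), hC, fun f hf => ?_⟩
  set A := ⨆ (y : ℝ) (_ : 0 < y), ENNReal.ofReal y * (μ {x | y < ‖f x‖}) ^ (1/p) with hA
  set B := ⨆ (E : Set X) (_ : MeasurableSet E ∧ 0 < μ E ∧ μ E < ⊤),
      (μ E) ^ (-(1/p')) * ∫⁻ x in E, ENNReal.ofReal ‖f x‖ ∂μ with hB
  have hnm : Measurable fun x => ENNReal.ofReal ‖f x‖ := hf.norm.ennreal_ofReal
  -- key lemma used in both directions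
  have key : ∀ y : ℝ, 0 < y → ∀ E : Set X, MeasurableSet E → E ⊆ {x | y < ‖f x‖} →
      μ E < ⊤ → ENNReal.ofReal y * (μ E) ^ (1/p) ≤ B := by
    intro y hy E hEm hEs hElt
    rcases eq_or_ne (μ E) 0 with h0 | h0
    · rw [h0, ENNReal.zero_rpow_of_pos hpinv, mul_zero]; exact zero_le
    · have h1 : ENNReal.ofReal y * μ E ≤ ∫⁻ x in E, ENNReal.ofReal ‖f x‖ ∂μ := by
        rw [← setLIntegral_const]
        exact setLIntegral_mono hnm fun x hx =>
          ENNReal.ofReal_le_ofReal (le_of_lt (hEs hx))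
      have hrp : (μ E) ^ (-(1/p')) * μ E = (μ E) ^ (1/p) := by
        nth_rewrite 2 [← ENNReal.rpow_one (μ E)]
        rw [← ENNReal.rpow_add _ _ h0 hElt.ne]
        congr 1; linarith
      have h2 : ENNReal.ofReal y * (μ E) ^ (1/p)
          ≤ (μ E) ^ (-(1/p')) * ∫⁻ x in E, ENNReal.ofReal ‖f x‖ ∂μ := by
        calc ENNReal.ofReal y * (μ E) ^ (1/p)
            = (μ E) ^ (-(1/p')) * (ENNReal.ofReal y * μ E) := by rw [← hrp]; ring
          _ ≤ _ := mul_le_mul_right h1 _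
      exact h2.trans (le_iSup₂_of_le E ⟨hEm, pos_iff_ne_zero.mpr h0, hElt⟩ le_rfl)
  have hdir2 : A ≤ B := by
    refine iSup₂_le fun y hy => ?_
    have hSm : MeasurableSet {x | y < ‖f x‖} := measurableSet_lt measurable_const hf.norm
    rcases lt_or_eq_of_le (le_top : μ {x | y < ‖f x‖} ≤ ⊤) with hlt | htop
    · exact key y hy _ hSm subset_rfl hlt
    · -- infinite measure level set: B must be ⊤
      by_contra hcon
      push_neg at hcon
      have hBtop : B ≠ ⊤ := hcon.ne_top
      have hy0 : ENNReal.ofReal y ≠ 0 := (ENNReal.ofReal_pos.mpr hy).ne'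
      set En : ℕ → Set X := fun n => {x | y < ‖f x‖} ∩ spanningSets μ n with hEn
      have hmono : Monotone En := fun n m h =>
        inter_subset_inter_right _ (monotone_spanningSets μ h)
      have hcup : ⋃ n, En n = {x | y < ‖f x‖} := by
        rw [hEn, ← inter_iUnion, iUnion_spanningSets, inter_univ]
      have hbd : ∀ n, μ (En n) ≤ (B / ENNReal.ofReal y) ^ p := by
        intro n
        have hlt : μ (En n) < ⊤ :=
          (measure_mono inter_subset_right).trans_lt (measure_spanningSets_lt_top μ n)
        have h1 : ENNReal.ofReal y * (μ (En n)) ^ (1/p) ≤ B :=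
          key y hy _ (hSm.inter (measurableSet_spanningSets μ n)) inter_subset_left hlt
        have h2 : (μ (En n)) ^ (1/p) ≤ B / ENNReal.ofReal y := by
          rw [ENNReal.le_div_iff_mul_le (Or.inl hy0) (Or.inl ENNReal.ofReal_ne_top)]
          rwa [mul_comm]
        calc μ (En n) = ((μ (En n)) ^ (1/p)) ^ p := by
              rw [← ENNReal.rpow_mul, one_div_mul_cancel hp0.ne', ENNReal.rpow_one]
          _ ≤ (B / ENNReal.ofReal y) ^ p := ENNReal.rpow_le_rpow h2 hp0.le
      have : μ {x | y < ‖f x‖} ≤ (B / ENNReal.ofReal y) ^ p := by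
        rw [← hcup, hmono.directed_le.measure_iUnion]
        exact iSup_le hbd
      have hfin : (B / ENNReal.ofReal y) ^ p < ⊤ :=
        ENNReal.rpow_lt_top_of_nonneg hp0.le ((ENNReal.div_lt_top hBtop hy0).ne)
      rw [htop] at this
      exact (not_le.mpr hfin) this
  refine ⟨?_, hdir2⟩
  -- direction 1
  refine iSup₂_le fun E hE => ?_
  obtain ⟨hEm, hE0, hEtop⟩ := hE
  have hlayer : ∫⁻ x in E, ENNReal.ofReal ‖f x‖ ∂μ
      = ∫⁻ t in Ioi (0:ℝ), μ.restrict E {x | t < ‖f x‖} :=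
    lintegral_eq_lintegral_meas_lt (μ.restrict E)
      (Filter.Eventually.of_forall fun x => norm_nonneg _) hf.norm.aemeasurable
  rcases eq_or_ne A ⊤ with hAtop | hAtop
  · rw [hAtop, ENNReal.mul_top (ENNReal.ofReal_pos.mpr hC).ne']
    exact le_top
  rcases eq_or_ne A 0 with hA0 | hA0
  · -- f is a.e. zero
    have hz : ∀ t : ℝ, 0 < t → μ {x | t < ‖f x‖} = 0 := by
      intro t ht
      have h1 : ENNReal.ofReal t * (μ {x | t < ‖f x‖}) ^ (1/p) ≤ A :=
        le_iSup₂_of_le t ht le_rfl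
      rw [hA0, le_zero_iff, mul_eq_zero] at h1
      rcases h1 with h1 | h1
      · exact absurd h1 (ENNReal.ofReal_pos.mpr ht).ne'
      · rwa [ENNReal.rpow_eq_zero_iff_of_pos hpinv] at h1
    have hz2 : ∫⁻ t in Ioi (0:ℝ), μ.restrict E {x | t < ‖f x‖} = 0 := by
      refine le_antisymm ?_ zero_le
      calc ∫⁻ t in Ioi (0:ℝ), μ.restrict E {x | t < ‖f x‖}
          ≤ ∫⁻ _ in Ioi (0:ℝ), 0 := setLIntegral_mono measurable_const fun t ht =>
            le_trans (Measure.restrict_apply_le _ _) (le_of_eq (hz t ht))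
        _ = 0 := by simp
    rw [hlayer, hz2, mul_zero]
    exact zero_le
  -- main case: 0 < A < ⊤
  set a := A.toReal with ha_def
  have ha : 0 < a := ENNReal.toReal_pos hA0 hAtop
  set m := (μ E).toReal with hm_def
  have hm : 0 < m := ENNReal.toReal_pos hE0.ne' hEtop.ne
  set t0 := a * m ^ (-(1/p)) with ht0_def
  have ht0 : 0 < t0 := by positivity
  -- pointwise bound on the tail
  have hbound : ∀ t ∈ Ioi t0, μ.restrict E {x | t < ‖f x‖}
      ≤ ENNReal.ofReal (a ^ p * t ^ (-p)) := by
    intro t ht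
    have htpos : 0 < t := ht0.trans ht
    have h1 : ENNReal.ofReal t * (μ {x | t < ‖f x‖}) ^ (1/p) ≤ A :=
      le_iSup₂_of_le t htpos le_rfl
    have h2 : (μ {x | t < ‖f x‖}) ^ (1/p) ≤ A / ENNReal.ofReal t := by
      rw [ENNReal.le_div_iff_mul_le (Or.inl (ENNReal.ofReal_pos.mpr htpos).ne')
        (Or.inl ENNReal.ofReal_ne_top)]
      rwa [mul_comm]
    have h3 : μ {x | t < ‖f x‖} ≤ (A / ENNReal.ofReal t) ^ p := by
      calc μ {x | t < ‖f x‖} = ((μ {x | t < ‖f x‖}) ^ (1/p)) ^ p := by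
            rw [← ENNReal.rpow_mul, one_div_mul_cancel hp0.ne', ENNReal.rpow_one]
        _ ≤ _ := ENNReal.rpow_le_rpow h2 hp0.le
    calc μ.restrict E {x | t < ‖f x‖} ≤ μ {x | t < ‖f x‖} := Measure.restrict_apply_le _ _
      _ ≤ (A / ENNReal.ofReal t) ^ p := h3
      _ = ENNReal.ofReal (a ^ p * t ^ (-p)) := by
          rw [← ENNReal.ofReal_toReal hAtop, ← ha_def,
            ← ENNReal.ofReal_div_of_pos htpos,
            ENNReal.ofReal_rpow_of_nonneg (by positivity) hp0.le]
          congr 1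
          rw [Real.div_rpow ha.le htpos.le, Real.rpow_neg htpos.le, div_eq_mul_inv]
  -- split the integral
  have hsplit : ∫⁻ t in Ioi (0:ℝ), μ.restrict E {x | t < ‖f x‖}
      = (∫⁻ t in Ioc (0:ℝ) t0, μ.restrict E {x | t < ‖f x‖})
        + ∫⁻ t in Ioi t0, μ.restrict E {x | t < ‖f x‖} := by
    rw [← lintegral_union measurableSet_Ioi (Set.Ioc_disjoint_Ioi le_rfl),
      Set.Ioc_union_Ioi_eq_Ioi ht0.le]
  have hpiece1 : ∫⁻ t in Ioc (0:ℝ) t0, μ.restrict E {x | t < ‖f x‖}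
      ≤ μ E * ENNReal.ofReal t0 := by
    calc ∫⁻ t in Ioc (0:ℝ) t0, μ.restrict E {x | t < ‖f x‖}
        ≤ ∫⁻ _ in Ioc (0:ℝ) t0, μ E := setLIntegral_mono measurable_const fun t _ =>
          le_trans (measure_mono (subset_univ _)) (le_of_eq (Measure.restrict_apply_univ E))
      _ = μ E * volume (Ioc (0:ℝ) t0) := setLIntegral_const _ _
      _ = μ E * ENNReal.ofReal t0 := by rw [Real.volume_Ioc, sub_zero]
  have hint : IntegrableOn (fun t : ℝ => a ^ p * t ^ (-p)) (Ioi t0) :=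
    (integrableOn_Ioi_rpow_of_lt (by linarith) ht0).const_mul _
  have hpiece2 : ∫⁻ t in Ioi t0, μ.restrict E {x | t < ‖f x‖}
      ≤ ENNReal.ofReal (a ^ p * (t0 ^ (1-p) / (p-1))) := by
    have hmble : Measurable fun t : ℝ => ENNReal.ofReal (a ^ p * t ^ (-p)) := by
      fun_prop
    calc ∫⁻ t in Ioi t0, μ.restrict E {x | t < ‖f x‖}
        ≤ ∫⁻ t in Ioi t0, ENNReal.ofReal (a ^ p * t ^ (-p)) :=
          setLIntegral_mono hmble hbound
      _ = ENNReal.ofReal (∫ t in Ioi t0, a ^ p * t ^ (-p)) := by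
          refine (ofReal_integral_eq_lintegral_ofReal hint ?_).symm
          refine (ae_restrict_iff' measurableSet_Ioi).mpr
            (Filter.Eventually.of_forall fun t ht => ?_)
          have : 0 < t := ht0.trans ht
          positivity
      _ = ENNReal.ofReal (a ^ p * (t0 ^ (1-p) / (p-1))) := by
          congr 1
          rw [MeasureTheory.integral_const_mul, integral_Ioi_rpow_of_lt (by linarith) ht0]
          congr 1
          rw [show (-p) + 1 = 1 - p by ring]
          have h1p : (1:ℝ) - p ≠ 0 := by linarith
          have h2p : p - 1 ≠ 0 := by linarith
          field_simp
          ring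
  -- real computation
  have hmt0 : m * t0 = a * m ^ (1/p') := by
    rw [ht0_def, hp'eq, show (1:ℝ) - 1/p = 1 + (-(1/p)) by ring, Real.rpow_add hm,
      Real.rpow_one]
    ring
  have e1 : t0 ^ (1-p) = a ^ (1-p) * m ^ (1/p') := by
    rw [ht0_def, Real.mul_rpow ha.le (Real.rpow_nonneg hm.le _), ← Real.rpow_mul hm.le]
    congr 1
    rw [hp'eq]
    field_simp
    congr 1; ring
  have e2 : a ^ p * (t0 ^ (1-p) / (p-1)) = (a * m ^ (1/p')) * (1/(p-1)) := by
    rw [e1]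
    have haa : a ^ p * a ^ (1-p) = a := by
      rw [← Real.rpow_add ha]; norm_num
    calc a ^ p * (a ^ (1-p) * m ^ (1/p') / (p-1))
        = (a ^ p * a ^ (1-p)) * m ^ (1/p') * (1/(p-1)) := by ring
      _ = _ := by rw [haa]
  have hreal : m ^ (-(1/p')) * (m * t0 + a ^ p * (t0 ^ (1-p)/(p-1))) = p/(p-1) * a := by
    rw [hmt0, e2]
    have hmm : m ^ (-(1/p')) * m ^ (1/p') = 1 := by
      rw [← Real.rpow_add hm]; norm_num
    calc m ^ (-(1/p')) * (a * m ^ (1/p') + a * m ^ (1/p') * (1/(p-1)))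
        = (m ^ (-(1/p')) * m ^ (1/p')) * (a * (1 + 1/(p-1))) := by ring
      _ = a * (1 + 1/(p-1)) := by rw [hmm, one_mul]
      _ = p/(p-1) * a := by
          have h2p : p - 1 ≠ 0 := by linarith
          field_simp
          ring
  have hμE : μ E = ENNReal.ofReal m := (ENNReal.ofReal_toReal hEtop.ne).symm
  have hnn1 : (0:ℝ) ≤ m * t0 := mul_nonneg hm.le ht0.le
  have hnn2 : (0:ℝ) ≤ a ^ p * (t0 ^ (1-p)/(p-1)) :=
    mul_nonneg (Real.rpow_nonneg ha.le _)
      (div_nonneg (Real.rpow_nonneg ht0.le _) (by linarith))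
  rw [hlayer, hsplit]
  calc (μ E) ^ (-(1/p')) * ((∫⁻ t in Ioc (0:ℝ) t0, μ.restrict E {x | t < ‖f x‖})
        + ∫⁻ t in Ioi t0, μ.restrict E {x | t < ‖f x‖})
      ≤ (μ E) ^ (-(1/p')) * (μ E * ENNReal.ofReal t0
          + ENNReal.ofReal (a ^ p * (t0 ^ (1-p)/(p-1)))) :=
        mul_le_mul_right (add_le_add hpiece1 hpiece2) _
    _ = ENNReal.ofReal (m ^ (-(1/p')) * (m * t0 + a ^ p * (t0 ^ (1-p)/(p-1)))) := by
        rw [hμE, ENNReal.ofReal_rpow_of_pos hm, ← ENNReal.ofReal_mul hm.le,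
          ← ENNReal.ofReal_add hnn1 hnn2,
          ← ENNReal.ofReal_mul (Real.rpow_nonneg hm.le _)]
    _ = ENNReal.ofReal (p/(p-1) * a) := by rw [hreal]
    _ = ENNReal.ofReal (p/(p-1)) * A := by
        rw [ENNReal.ofReal_mul hC.le, ha_def, ENNReal.ofReal_toReal hAtop]
end

section
/- Let n ≥ 2, let α ∈ ℝⁿ have nonnegative entries with α₁ = α₂ = max_j α_j > 0, and for s ∈ (0, 1/4) let F_s = {z ∈ 𝔻ⁿ : |z₁z₂| < s, s < |z₁| < √s}. Then there exist constants c, C > 0 independent of s such that c · s^{2α₁+2} log(1/s) ≤ ∫_{F_s} ∏_j |z_j|^{2α_j} dV(z) ≤ C · s^{2α₁+2} log(1/s) for all sufficiently small s. -/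
open MeasureTheory
open scoped ENNReal

private lemma vol_ball0 (r : ℝ) (hr : 0 ≤ r) :
    volume (Metric.ball (0:ℂ) r) = ENNReal.ofReal (Real.pi * r ^ 2) := by
  rw [Complex.volume_ball,
    show ((NNReal.pi : ℝ≥0∞)) = ENNReal.ofReal Real.pi by
      rw [← NNReal.coe_real_pi, ENNReal.ofReal_coe_nnreal],
    ← ENNReal.ofReal_pow hr, ← ENNReal.ofReal_mul (by positivity)]
  ring_nf

private lemma vol_ann_ball (a b : ℝ) (ha : 0 ≤ a) (hab : a ≤ b) :
    volume (Metric.ball (0:ℂ) b \ Metric.ball (0:ℂ) a) =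
      ENNReal.ofReal (Real.pi * (b ^ 2 - a ^ 2)) := by
  have hb : 0 ≤ b := ha.trans hab
  rw [measure_diff (Metric.ball_subset_ball hab) measurableSet_ball.nullMeasurableSet
    (by rw [Complex.volume_ball]; exact ENNReal.mul_ne_top (by simp) ENNReal.coe_ne_top),
    Complex.volume_ball, Complex.volume_ball]
  rw [show ((NNReal.pi : ℝ≥0∞)) = ENNReal.ofReal Real.pi by
    rw [← NNReal.coe_real_pi, ENNReal.ofReal_coe_nnreal]]
  rw [← ENNReal.ofReal_pow hb, ← ENNReal.ofReal_pow ha, ← ENNReal.ofReal_mul (by positivity),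
    ← ENNReal.ofReal_mul (by positivity), ← ENNReal.ofReal_sub _ (by positivity)]
  ring_nf

private lemma vol_ann_cball (a b : ℝ) (ha : 0 ≤ a) (hab : a < b) :
    volume (Metric.ball (0:ℂ) b \ Metric.closedBall (0:ℂ) a) =
      ENNReal.ofReal (Real.pi * (b ^ 2 - a ^ 2)) := by
  have hb : 0 ≤ b := ha.trans hab.le
  rw [measure_diff (Metric.closedBall_subset_ball hab)
    measurableSet_closedBall.nullMeasurableSet
    (by rw [Complex.volume_closedBall]; exact ENNReal.mul_ne_top (by simp) ENNReal.coe_ne_top),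
    Complex.volume_ball, Complex.volume_closedBall]
  rw [show ((NNReal.pi : ℝ≥0∞)) = ENNReal.ofReal Real.pi by
    rw [← NNReal.coe_real_pi, ENNReal.ofReal_coe_nnreal]]
  rw [← ENNReal.ofReal_pow hb, ← ENNReal.ofReal_pow ha, ← ENNReal.ofReal_mul (by positivity),
    ← ENNReal.ofReal_mul (by positivity), ← ENNReal.ofReal_sub _ (by positivity)]
  ring_nf

private lemma prod_ite_two {M : Type*} [CommMonoid M] {n : ℕ} (i0 i1 : Fin n) (h : i0 ≠ i1)
    (a b c : M) :
    (∏ j : Fin n, if j = i0 then a else if j = i1 then b else c) = a * b * c ^ (n - 2) := by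
  have h1 : i1 ∈ Finset.univ.erase i0 := Finset.mem_erase.mpr ⟨h.symm, Finset.mem_univ i1⟩
  rw [← Finset.mul_prod_erase Finset.univ _ (Finset.mem_univ i0),
    ← Finset.mul_prod_erase _ _ h1, if_pos rfl, if_neg h.symm, if_pos rfl]
  have hprod : ∏ j ∈ (Finset.univ.erase i0).erase i1,
      (if j = i0 then a else if j = i1 then b else c) = c ^ (n - 2) := by
    rw [Finset.prod_congr rfl (fun j hj => ?_), Finset.prod_const]
    · congr 1
      rw [Finset.card_erase_of_mem h1, Finset.card_erase_of_mem (Finset.mem_univ i0),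
        Finset.card_univ, Fintype.card_fin]
      omega
    · obtain ⟨hj1, hj'⟩ := Finset.mem_erase.mp hj
      obtain ⟨hj0, -⟩ := Finset.mem_erase.mp hj'
      rw [if_neg hj0, if_neg hj1]
  rw [hprod, mul_assoc]

set_option maxHeartbeats 2000000 in
theorem aux19 (n : ℕ) (hn : 2 ≤ n) (i0 i1 : Fin n) (hne : i0 ≠ i1) (α : Fin n → ℝ)
    (hα : ∀ j, 0 ≤ α j) (h01 : α i0 = α i1) (hmax : ∀ j, α j ≤ α i0) (hpos : 0 < α i0) :
    ∃ c C s₀ : ℝ, 0 < c ∧ 0 < C ∧ 0 < s₀ ∧ s₀ < 1/4 ∧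
      ∀ s : ℝ, 0 < s → s < s₀ →
        ENNReal.ofReal (c * s ^ (2 * α i0 + 2) * Real.log (1/s)) ≤
          (∫⁻ z in {z : Fin n → ℂ | (∀ j, ‖z j‖ < 1) ∧
              ‖z i0 * z i1‖ < s ∧
              s < ‖z i0‖ ∧
              ‖z i0‖ < Real.sqrt s},
            ENNReal.ofReal (∏ j, ‖z j‖ ^ (2 * α j))) ∧
        (∫⁻ z in {z : Fin n → ℂ | (∀ j, ‖z j‖ < 1) ∧
              ‖z i0 * z i1‖ < s ∧
              s < ‖z i0‖ ∧
              ‖z i0‖ < Real.sqrt s},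
            ENNReal.ofReal (∏ j, ‖z j‖ ^ (2 * α j))) ≤
          ENNReal.ofReal (C * s ^ (2 * α i0 + 2) * Real.log (1/s)) := by
  classical
  set A := α i0 with hAdef
  have hA : 0 < A := hpos
  have hlog2 : 0 < Real.log 2 := Real.log_pos one_lt_two
  set d : ℝ := (1/2 : ℝ) ^ (2*A) with hd
  have hd0 : 0 < d := Real.rpow_pos_of_pos (by norm_num) _
  set cl : ℝ := (1/4 : ℝ) ^ (2*A) * d ^ (n-2) * (Real.pi^n * (9/16) * (3/4:ℝ)^(n-2)) with hcl
  have hq0 : (0:ℝ) < (1/4 : ℝ) ^ (2*A) := Real.rpow_pos_of_pos (by norm_num) _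
  have hcl0 : 0 < cl := by positivity
  set Cu : ℝ := (2:ℝ)^(2*A) * (Real.pi^n * 3) with hCu
  have h2A0 : (0:ℝ) < (2:ℝ)^(2*A) := Real.rpow_pos_of_pos (by norm_num) _
  have hCu0 : 0 < Cu := by positivity
  -- measurability of the integrand
  have hfm : Measurable (fun z : Fin n → ℂ =>
      ENNReal.ofReal (∏ j, ‖z j‖ ^ (2 * α j))) := by
    apply Measurable.ennreal_ofReal
    apply Finset.measurable_prod
    intro j _
    exact ((Real.continuous_rpow_const (by linarith [hα j])).comp
      (continuous_norm.comp (continuous_apply j))).measurable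
  refine ⟨cl / (4 * Real.log 2), Cu / Real.log 2, 1/8, div_pos hcl0 (by linarith),
    div_pos hCu0 hlog2, by norm_num, by norm_num, ?_⟩
  intro s hs hs8
  have hsq : 0 < Real.sqrt s := Real.sqrt_pos.mpr hs
  have hsqlt : Real.sqrt s < 1/2 := (Real.sqrt_lt' (by norm_num)).mpr (by nlinarith)
  have hx2 : 2 < (Real.sqrt s)⁻¹ := by
    rw [← one_div, lt_div_iff₀ hsq]; linarith
  set N := Nat.log 2 ⌊(Real.sqrt s)⁻¹⌋₊ with hN
  have hfl2 : 2 ≤ ⌊(Real.sqrt s)⁻¹⌋₊ := Nat.le_floor (by exact_mod_cast hx2.le)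
  have hN1 : 1 ≤ N := Nat.log_pos one_lt_two hfl2
  have h2N : (2:ℝ)^N ≤ (Real.sqrt s)⁻¹ := by
    calc ((2:ℝ)^N) = ((2^N : ℕ) : ℝ) := by push_cast; ring
    _ ≤ (⌊(Real.sqrt s)⁻¹⌋₊ : ℝ) := by exact_mod_cast Nat.pow_log_le_self 2 (by omega)
    _ ≤ _ := Nat.floor_le (by positivity)
  have h2N' : (Real.sqrt s)⁻¹ < (2:ℝ)^(N+1) := by
    calc (Real.sqrt s)⁻¹ < (⌊(Real.sqrt s)⁻¹⌋₊ : ℝ) + 1 := Nat.lt_floor_add_one _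
    _ ≤ ((2:ℝ)^(N+1)) := by
        exact_mod_cast Nat.succ_le_of_lt (Nat.lt_pow_succ_log_self one_lt_two _)
  clear_value N
  have hloginv : Real.log (1/s) = - Real.log s := by rw [one_div, Real.log_inv]
  have hlogsq : Real.log ((Real.sqrt s)⁻¹) = Real.log (1/s) / 2 := by
    rw [Real.log_inv, Real.log_sqrt hs.le, hloginv]; ring
  have hlogN : (N:ℝ) * Real.log 2 ≤ Real.log (1/s) / 2 := by
    have h := Real.log_le_log (by positivity) h2N
    rwa [Real.log_pow, hlogsq] at h
  have hlogN' : Real.log (1/s) / 2 < ((N:ℝ)+1) * Real.log 2 := by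
    have h := Real.log_lt_log (by positivity) h2N'
    rw [Real.log_pow, hlogsq] at h
    push_cast at h
    linarith
  have hlogpos : 0 < Real.log (1/s) := Real.log_pos ((one_lt_div hs).mpr (by linarith))
  have hlowN : Real.log (1/s) ≤ 4 * (N:ℝ) * Real.log 2 := by
    have hN1' : (1:ℝ) ≤ (N:ℝ) := by exact_mod_cast hN1
    nlinarith
  have hupN : ((N:ℝ)+1) * Real.log 2 ≤ Real.log (1/s) := by
    have h4 : Real.log 4 ≤ Real.log (1/s) := by
      apply Real.log_le_log (by norm_num)
      rw [le_div_iff₀ hs]; linarith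
    have h42 : Real.log 4 = 2 * Real.log 2 := by
      rw [show (4:ℝ) = 2^2 by norm_num, Real.log_pow]; push_cast; ring
    linarith
  have hspow : s ^ (2*A+2) = s ^ (2*A) * s^2 := by
    rw [Real.rpow_add hs, Real.rpow_two]
  have hsA : 0 < s ^ (2*A) := Real.rpow_pos_of_pos hs _
  set f : (Fin n → ℂ) → ℝ≥0∞ :=
    fun z => ENNReal.ofReal (∏ j, ‖z j‖ ^ (2 * α j)) with hf
  set F : Set (Fin n → ℂ) := {z : Fin n → ℂ | (∀ j, ‖z j‖ < 1) ∧
      ‖z i0 * z i1‖ < s ∧ s < ‖z i0‖ ∧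
      ‖z i0‖ < Real.sqrt s} with hF
  have hpow2pos : ∀ k : ℕ, (0:ℝ) < 2^k := fun k => by positivity
  set T : ℕ → Fin n → Set ℂ := fun k j =>
    if j = i0 then Metric.ball 0 ((2:ℝ)^(k+1)*s) \ Metric.ball 0 ((2:ℝ)^k*s)
    else if j = i1 then Metric.ball 0 (((2:ℝ)^k)⁻¹) else Metric.ball 0 1 with hT
  set B : ℕ → Fin n → Set ℂ := fun k j =>
    if j = i0 then Metric.ball 0 ((2:ℝ)^(k+1)*s) \ Metric.closedBall 0 ((2:ℝ)^k*s)
    else if j = i1 then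
      Metric.ball 0 (((2:ℝ)^(k+1))⁻¹) \ Metric.closedBall 0 (((2:ℝ)^(k+2))⁻¹)
    else Metric.ball 0 1 \ Metric.closedBall 0 (1/2 : ℝ) with hB
  have hTmeas : ∀ k, MeasurableSet (Set.pi Set.univ (T k)) := by
    intro k
    apply MeasurableSet.univ_pi
    intro j
    simp only [hT]
    split_ifs
    · exact measurableSet_ball.diff measurableSet_ball
    · exact measurableSet_ball
    · exact measurableSet_ball
  have hBmeas : ∀ k, MeasurableSet (Set.pi Set.univ (B k)) := by
    intro k
    apply MeasurableSet.univ_pi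
    intro j
    simp only [hB]
    split_ifs <;> exact measurableSet_ball.diff measurableSet_closedBall
  -- covering
  have hFsubset : F ⊆ ⋃ k ∈ Finset.range (N+1), Set.pi Set.univ (T k) := by
    rintro z ⟨h1, h2, h3, h4⟩
    have hz0pos : 0 < ‖z i0‖ := lt_trans hs h3
    set x := ‖z i0‖ / s with hx
    have hx1 : 1 < x := (one_lt_div hs).mpr h3
    set k := Nat.log 2 ⌊x⌋₊ with hk
    have hfx : 1 ≤ ⌊x⌋₊ := Nat.le_floor (by exact_mod_cast hx1.le)
    have hk1 : (2:ℝ)^k ≤ x := by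
      calc ((2:ℝ)^k) = ((2^k : ℕ) : ℝ) := by push_cast; ring
      _ ≤ (⌊x⌋₊ : ℝ) := by exact_mod_cast Nat.pow_log_le_self 2 (by omega)
      _ ≤ x := Nat.floor_le (by positivity)
    have hk2 : x < (2:ℝ)^(k+1) := by
      calc x < (⌊x⌋₊ : ℝ) + 1 := Nat.lt_floor_add_one _
      _ ≤ ((2:ℝ)^(k+1)) := by
          exact_mod_cast Nat.succ_le_of_lt (Nat.lt_pow_succ_log_self one_lt_two _)
    clear_value k
    have hxlt : x < (Real.sqrt s)⁻¹ := by
      rw [hx, div_lt_iff₀ hs]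
      calc ‖z i0‖ < Real.sqrt s := h4
      _ = (Real.sqrt s)⁻¹ * s := by
          rw [inv_mul_eq_div, Real.div_sqrt]
    have hxs : x * s = ‖z i0‖ := by rw [hx]; field_simp
    clear_value x
    clear hx hk hfx
    have hkN : k < N + 1 := by
      by_contra hcon
      push_neg at hcon
      have hh : (2:ℝ)^(N+1) ≤ (2:ℝ)^k := pow_le_pow_right₀ one_le_two hcon
      linarith
    refine Set.mem_iUnion₂.mpr ⟨k, Finset.mem_range.mpr hkN, ?_⟩
    intro j _
    by_cases hj0 : j = i0
    · simp only [hT]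
      rw [if_pos hj0, hj0]
      simp only [Set.mem_diff, mem_ball_zero_iff, not_lt]
      rw [← hxs]
      exact ⟨mul_lt_mul_of_pos_right hk2 hs, mul_le_mul_of_nonneg_right hk1 hs.le⟩
    · by_cases hj1 : j = i1
      · simp only [hT]
        rw [if_neg hj0, if_pos hj1, hj1]
        simp only [mem_ball_zero_iff]
        have hles : (2:ℝ)^k * s ≤ ‖z i0‖ := by
          rw [← hxs]
          exact mul_le_mul_of_nonneg_right hk1 hs.le
        have habs : ‖z i0‖ * ‖z i1‖ < s := by
          rw [← norm_mul]; exact h2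
        have hmul : ‖z i1‖ * ((2:ℝ)^k * s) < s := by
          calc ‖z i1‖ * ((2:ℝ)^k * s)
              ≤ ‖z i1‖ * ‖z i0‖ :=
                mul_le_mul_of_nonneg_left hles (norm_nonneg _)
          _ = ‖z i0‖ * ‖z i1‖ := by ring
          _ < s := habs
        rw [← one_div, lt_div_iff₀ (hpow2pos k)]
        have hfin : (‖z i1‖ * 2^k) * s < 1 * s := by
          rw [one_mul]
          calc (‖z i1‖ * 2^k) * s = ‖z i1‖ * (2^k * s) := by ring
          _ < s := hmul
        exact lt_of_mul_lt_mul_right hfin hs.le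
      · simp only [hT]
        rw [if_neg hj0, if_neg hj1]
        simp only [mem_ball_zero_iff]
        exact h1 j
  -- disjointness
  have key0 : ∀ (a b : ℕ), a < b → ∀ z : Fin n → ℂ, z ∈ Set.pi Set.univ (T a) →
      z ∈ Set.pi Set.univ (T b) → False := by
    intro a b hab z hza hzb
    have h0a := hza i0 (Set.mem_univ _)
    have h0b := hzb i0 (Set.mem_univ _)
    simp only [hT, if_pos rfl, Set.mem_diff, mem_ball_zero_iff,
      not_lt] at h0a h0b
    have hh : (2:ℝ)^(a+1) ≤ (2:ℝ)^b := pow_le_pow_right₀ one_le_two hab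
    have hh2 : (2:ℝ)^(a+1) * s ≤ (2:ℝ)^b * s := mul_le_mul_of_nonneg_right hh hs.le
    linarith [h0a.1, h0b.2]
  have hTdisj : Set.PairwiseDisjoint ↑(Finset.range (N+1))
      (fun k => Set.pi Set.univ (T k)) := by
    intro a _ b _ hab
    refine Set.disjoint_left.mpr fun {z} hza hzb => ?_
    rcases lt_or_gt_of_ne hab with h | h
    · exact key0 a b h z hza hzb
    · exact key0 b a h z hzb hza
  have key0B : ∀ (a b : ℕ), a < b → ∀ z : Fin n → ℂ, z ∈ Set.pi Set.univ (B a) →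
      z ∈ Set.pi Set.univ (B b) → False := by
    intro a b hab z hza hzb
    have h0a := hza i0 (Set.mem_univ _)
    have h0b := hzb i0 (Set.mem_univ _)
    simp only [hB, if_pos rfl, Set.mem_diff, mem_ball_zero_iff, mem_closedBall_zero_iff,
      not_le] at h0a h0b
    have hh : (2:ℝ)^(a+1) ≤ (2:ℝ)^b := pow_le_pow_right₀ one_le_two hab
    have hh2 : (2:ℝ)^(a+1) * s ≤ (2:ℝ)^b * s := mul_le_mul_of_nonneg_right hh hs.le
    linarith [h0a.1, h0b.2]
  have hBdisj : Set.PairwiseDisjoint ↑(Finset.range N)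
      (fun k => Set.pi Set.univ (B k)) := by
    intro a _ b _ hab
    refine Set.disjoint_left.mpr fun {z} hza hzb => ?_
    rcases lt_or_gt_of_ne hab with h | h
    · exact key0B a b h z hza hzb
    · exact key0B b a h z hzb hza
  have hππ : Real.pi ^ 2 * Real.pi^(n-2) = Real.pi^n := by
    rw [← pow_add]; congr 1; omega
  -- upper per-box bound
  have hboxU : ∀ k, (∫⁻ z in Set.pi Set.univ (T k), f z)
      ≤ ENNReal.ofReal (Cu * (s ^ (2*A) * s^2)) := by
    intro k
    have h2k := hpow2pos k
    have h2k0 : ((2:ℝ)^k) ≠ 0 := ne_of_gt h2k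
    have hptU : ∀ z ∈ Set.pi Set.univ (T k),
        f z ≤ ENNReal.ofReal ((2:ℝ)^(2*A) * s ^ (2*A)) := by
      intro z hz
      simp only [hf]
      apply ENNReal.ofReal_le_ofReal
      have hbd : ∀ j, ‖z j‖ ^ (2 * α j) ≤
          (if j = i0 then ((2:ℝ)^(k+1)*s) ^ (2*A)
           else if j = i1 then (((2:ℝ)^k)⁻¹) ^ (2*A) else 1) := by
        intro j
        have hzj := hz j (Set.mem_univ _)
        simp only [hT] at hzj
        by_cases hj0 : j = i0
        · rw [if_pos hj0] at hzj
          simp only [Set.mem_diff, mem_ball_zero_iff] at hzj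
          rw [if_pos hj0, hj0, ← hAdef]
          exact Real.rpow_le_rpow (norm_nonneg _)
            (hj0 ▸ hzj.1.le) (by linarith)
        · by_cases hj1 : j = i1
          · rw [if_neg hj0, if_pos hj1] at hzj
            simp only [mem_ball_zero_iff] at hzj
            rw [if_neg hj0, if_pos hj1, hj1, ← h01]
            exact Real.rpow_le_rpow (norm_nonneg _)
              (hj1 ▸ hzj.le) (by linarith)
          · rw [if_neg hj0, if_neg hj1] at hzj
            simp only [mem_ball_zero_iff] at hzj
            rw [if_neg hj0, if_neg hj1]
            exact Real.rpow_le_one (norm_nonneg _) hzj.le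
              (by linarith [hα j])
      calc (∏ j, ‖z j‖ ^ (2 * α j))
          ≤ ∏ j, (if j = i0 then ((2:ℝ)^(k+1)*s) ^ (2*A)
             else if j = i1 then (((2:ℝ)^k)⁻¹) ^ (2*A) else 1) :=
            Finset.prod_le_prod
              (fun j _ => Real.rpow_nonneg (norm_nonneg _) _)
              (fun j _ => hbd j)
      _ = ((2:ℝ)^(k+1)*s) ^ (2*A) * (((2:ℝ)^k)⁻¹) ^ (2*A) * 1^(n-2) :=
            prod_ite_two i0 i1 hne _ _ _
      _ = (2:ℝ)^(2*A) * s ^ (2*A) := by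
            rw [one_pow, mul_one, ← Real.mul_rpow (by positivity) (by positivity),
              ← Real.mul_rpow (by positivity) hs.le]
            congr 1
            rw [pow_succ]
            field_simp
    have hvolT : volume (Set.pi Set.univ (T k)) = ENNReal.ofReal (Real.pi^n * 3 * s^2) := by
      rw [volume_pi_pi]
      have hkk : (2:ℝ)^k * s ≤ (2:ℝ)^(k+1) * s :=
        mul_le_mul_of_nonneg_right (pow_le_pow_right₀ one_le_two (Nat.le_succ k)) hs.le
      have hvt : ∀ j, volume (T k j) =
          (if j = i0 then ENNReal.ofReal (Real.pi * (((2:ℝ)^(k+1)*s)^2 - ((2:ℝ)^k*s)^2))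
           else if j = i1 then ENNReal.ofReal (Real.pi * (((2:ℝ)^k)⁻¹)^2)
           else ENNReal.ofReal (Real.pi * 1^2)) := by
        intro j
        simp only [hT]
        split_ifs
        · exact vol_ann_ball _ _ (by positivity) hkk
        · exact vol_ball0 _ (by positivity)
        · exact vol_ball0 _ (by norm_num)
      have hsub0 : (0:ℝ) ≤ Real.pi * (((2:ℝ)^(k+1)*s)^2 - ((2:ℝ)^k*s)^2) :=
        mul_nonneg Real.pi_pos.le
          (sub_nonneg.mpr (pow_le_pow_left₀ (by positivity) hkk 2))
      rw [Finset.prod_congr rfl (fun j _ => hvt j), prod_ite_two i0 i1 hne,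
        ← ENNReal.ofReal_pow (by positivity), ← ENNReal.ofReal_mul hsub0,
        ← ENNReal.ofReal_mul (mul_nonneg hsub0 (by positivity))]
      congr 1
      have hb1 : (((2:ℝ)^(k+1)*s)^2 - ((2:ℝ)^k*s)^2) * (((2:ℝ)^k)⁻¹)^2 = 3*s^2 := by
        rw [pow_succ]
        field_simp
        ring
      calc Real.pi * (((2:ℝ)^(k+1)*s)^2 - ((2:ℝ)^k*s)^2) * (Real.pi * (((2:ℝ)^k)⁻¹)^2)
            * (Real.pi * 1^2)^(n-2)
          = (Real.pi^2 * Real.pi^(n-2)) *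
            ((((2:ℝ)^(k+1)*s)^2 - ((2:ℝ)^k*s)^2) * (((2:ℝ)^k)⁻¹)^2) := by ring
        _ = Real.pi^n * 3 * s^2 := by rw [hππ, hb1]; ring
    calc (∫⁻ z in Set.pi Set.univ (T k), f z)
        ≤ ∫⁻ _ in Set.pi Set.univ (T k), ENNReal.ofReal ((2:ℝ)^(2*A) * s ^ (2*A)) :=
          setLIntegral_mono measurable_const hptU
      _ = ENNReal.ofReal ((2:ℝ)^(2*A) * s ^ (2*A)) * volume (Set.pi Set.univ (T k)) :=
          setLIntegral_const _ _
      _ = ENNReal.ofReal (Cu * (s ^ (2*A) * s^2)) := by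
          rw [hvolT, ← ENNReal.ofReal_mul (by positivity)]
          congr 1
          rw [hCu]
          ring
  -- facts for the lower boxes
  have h2Ns : (2:ℝ)^N * s ≤ Real.sqrt s := by
    calc (2:ℝ)^N * s ≤ (Real.sqrt s)⁻¹ * s := mul_le_mul_of_nonneg_right h2N hs.le
    _ = Real.sqrt s := by rw [inv_mul_eq_div, Real.div_sqrt]
  have hsubB : ∀ k, k < N → Set.pi Set.univ (B k) ⊆ F := by
    intro k hkN z hz
    have h2k := hpow2pos k
    have hz0 := hz i0 (Set.mem_univ _)
    have hz1 := hz i1 (Set.mem_univ _)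
    simp only [hB, eq_self_iff_true, if_true, Ne.symm hne, if_false, Set.mem_diff,
      mem_ball_zero_iff, mem_closedBall_zero_iff, not_le] at hz0 hz1
    have hup : (2:ℝ)^(k+1)*s ≤ Real.sqrt s := by
      calc (2:ℝ)^(k+1)*s ≤ 2^N*s :=
        mul_le_mul_of_nonneg_right (pow_le_pow_right₀ one_le_two (by omega)) hs.le
      _ ≤ Real.sqrt s := h2Ns
    have h21 : (2:ℝ) ≤ 2^(k+1) := by
      calc (2:ℝ) = 2^1 := (pow_one 2).symm
      _ ≤ 2^(k+1) := pow_le_pow_right₀ one_le_two (by omega)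
    have hinv12 : ((2:ℝ)^(k+1))⁻¹ ≤ 1/2 := by
      rw [← one_div]
      exact one_div_le_one_div_of_le (by norm_num) h21
    have h1k : (1:ℝ) ≤ 2^k := by
      calc (1:ℝ) = 1^k := (one_pow k).symm
      _ ≤ 2^k := pow_le_pow_left₀ (by norm_num) one_le_two k
    refine ⟨?_, ?_, ?_, ?_⟩
    · intro j
      by_cases hj0 : j = i0
      · rw [hj0]; linarith [hz0.1]
      · by_cases hj1 : j = i1
        · rw [hj1]; linarith [hz1.1]
        · have hzj := hz j (Set.mem_univ _)
          simp only [hB] at hzj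
          rw [if_neg hj0, if_neg hj1] at hzj
          simp only [Set.mem_diff, mem_ball_zero_iff, mem_closedBall_zero_iff,
            not_le] at hzj
          exact hzj.1
    · rw [norm_mul]
      have hmm : ‖z i0‖ * ‖z i1‖
          < ((2:ℝ)^(k+1)*s) * (((2:ℝ)^(k+1))⁻¹) :=
        mul_lt_mul'' hz0.1 hz1.1 (norm_nonneg _) (norm_nonneg _)
      have heq : ((2:ℝ)^(k+1)*s) * (((2:ℝ)^(k+1))⁻¹) = s := by
        field_simp
      linarith
    · have hle : s ≤ 2^k*s := le_mul_of_one_le_left hs.le h1k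
      linarith [hz0.2]
    · exact lt_of_lt_of_le hz0.1 hup
  -- lower per-box bound
  have hboxL : ∀ k, ENNReal.ofReal (cl * (s ^ (2*A) * s^2))
      ≤ ∫⁻ z in Set.pi Set.univ (B k), f z := by
    intro k
    have h2k := hpow2pos k
    have h2k1 := hpow2pos (k+1)
    have h2k2 := hpow2pos (k+2)
    set l : ℝ := ((2:ℝ)^k*s)^(2*A) * (((2:ℝ)^(k+2))⁻¹)^(2*A) * d^(n-2) with hl
    have hl0 : 0 < l := mul_pos (mul_pos
      (Real.rpow_pos_of_pos (mul_pos h2k hs) _)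
      (Real.rpow_pos_of_pos (by positivity) _)) (pow_pos hd0 _)
    have hptL : ∀ z ∈ Set.pi Set.univ (B k), ENNReal.ofReal l ≤ f z := by
      intro z hz
      simp only [hf]
      apply ENNReal.ofReal_le_ofReal
      have hbd : ∀ j, (if j = i0 then ((2:ℝ)^k*s) ^ (2*A)
          else if j = i1 then (((2:ℝ)^(k+2))⁻¹) ^ (2*A) else d)
          ≤ ‖z j‖ ^ (2 * α j) := by
        intro j
        have hzj := hz j (Set.mem_univ _)
        simp only [hB] at hzj
        by_cases hj0 : j = i0
        · rw [if_pos hj0] at hzj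
          simp only [Set.mem_diff, mem_ball_zero_iff, mem_closedBall_zero_iff,
            not_le] at hzj
          rw [if_pos hj0, hj0, ← hAdef]
          exact Real.rpow_le_rpow (by positivity) (hj0 ▸ hzj.2.le) (by linarith)
        · by_cases hj1 : j = i1
          · rw [if_neg hj0, if_pos hj1] at hzj
            simp only [Set.mem_diff, mem_ball_zero_iff, mem_closedBall_zero_iff,
              not_le] at hzj
            rw [if_neg hj0, if_pos hj1, hj1, ← h01]
            exact Real.rpow_le_rpow (by positivity) (hj1 ▸ hzj.2.le) (by linarith)
          · rw [if_neg hj0, if_neg hj1] at hzj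
            simp only [Set.mem_diff, mem_ball_zero_iff, mem_closedBall_zero_iff,
              not_le] at hzj
            rw [if_neg hj0, if_neg hj1]
            have hstep1 : d ≤ (1/2:ℝ) ^ (2 * α j) := by
              rw [hd]
              exact Real.rpow_le_rpow_of_exponent_ge (by norm_num) (by norm_num)
                (by linarith [hmax j])
            have hstep2 : (1/2:ℝ) ^ (2 * α j) ≤ ‖z j‖ ^ (2 * α j) :=
              Real.rpow_le_rpow (by norm_num) hzj.2.le (by linarith [hα j])
            exact hstep1.trans hstep2
      calc l = ∏ j, (if j = i0 then ((2:ℝ)^k*s) ^ (2*A)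
          else if j = i1 then (((2:ℝ)^(k+2))⁻¹) ^ (2*A) else d) :=
            (prod_ite_two i0 i1 hne _ _ _).symm
      _ ≤ ∏ j, ‖z j‖ ^ (2 * α j) :=
            Finset.prod_le_prod (fun j _ => by
              split_ifs
              · exact (Real.rpow_pos_of_pos (mul_pos h2k hs) _).le
              · exact (Real.rpow_pos_of_pos (by positivity) _).le
              · exact hd0.le) (fun j _ => hbd j)
    have hklt : (2:ℝ)^k*s < (2:ℝ)^(k+1)*s := by
      have hh : (2:ℝ)^k < 2^(k+1) := by
        rw [pow_succ]; nlinarith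
      exact mul_lt_mul_of_pos_right hh hs
    have hinvlt : ((2:ℝ)^(k+2))⁻¹ < ((2:ℝ)^(k+1))⁻¹ := by
      rw [← one_div, ← one_div]
      apply one_div_lt_one_div_of_lt h2k1
      have e2 : (2:ℝ)^(k+2) = 2^(k+1)*2 := pow_succ 2 (k+1)
      rw [e2]; nlinarith
    have hvolB : volume (Set.pi Set.univ (B k))
        = ENNReal.ofReal (Real.pi^n * (9/16) * (3/4:ℝ)^(n-2) * s^2) := by
      rw [volume_pi_pi]
      have hvb : ∀ j, volume (B k j) =
          (if j = i0 then
            ENNReal.ofReal (Real.pi * (((2:ℝ)^(k+1)*s)^2 - ((2:ℝ)^k*s)^2))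
           else if j = i1 then
            ENNReal.ofReal (Real.pi * ((((2:ℝ)^(k+1))⁻¹)^2 - (((2:ℝ)^(k+2))⁻¹)^2))
           else ENNReal.ofReal (Real.pi * ((1:ℝ)^2 - (1/2:ℝ)^2))) := by
        intro j
        simp only [hB]
        split_ifs
        · exact vol_ann_cball _ _ (by positivity) hklt
        · exact vol_ann_cball _ _ (by positivity) hinvlt
        · exact vol_ann_cball _ _ (by norm_num) (by norm_num)
      have hsub0 : (0:ℝ) ≤ Real.pi * (((2:ℝ)^(k+1)*s)^2 - ((2:ℝ)^k*s)^2) :=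
        mul_nonneg Real.pi_pos.le
          (sub_nonneg.mpr (pow_le_pow_left₀ (by positivity) hklt.le 2))
      have hsub1 : (0:ℝ) ≤ Real.pi * ((((2:ℝ)^(k+1))⁻¹)^2 - (((2:ℝ)^(k+2))⁻¹)^2) :=
        mul_nonneg Real.pi_pos.le
          (sub_nonneg.mpr (pow_le_pow_left₀ (by positivity) hinvlt.le 2))
      rw [Finset.prod_congr rfl (fun j _ => hvb j), prod_ite_two i0 i1 hne,
        ← ENNReal.ofReal_pow (mul_nonneg Real.pi_pos.le (by norm_num)),
        ← ENNReal.ofReal_mul hsub0,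
        ← ENNReal.ofReal_mul (mul_nonneg hsub0 hsub1)]
      congr 1
      have e1 : (2:ℝ)^(k+1) = 2^k*2 := pow_succ 2 k
      have e2 : (2:ℝ)^(k+2) = 2^k*4 := by rw [pow_add]; norm_num
      have hb1 : (((2:ℝ)^(k+1)*s)^2 - ((2:ℝ)^k*s)^2)
          * ((((2:ℝ)^(k+1))⁻¹)^2 - (((2:ℝ)^(k+2))⁻¹)^2) = (9/16)*s^2 := by
        rw [e1, e2]
        have h2k0 : ((2:ℝ)^k) ≠ 0 := ne_of_gt h2k
        field_simp
        ring
      have hπ34 : (Real.pi * ((1:ℝ)^2 - (1/2:ℝ)^2))^(n-2)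
          = Real.pi^(n-2) * (3/4:ℝ)^(n-2) := by
        rw [show ((1:ℝ)^2 - (1/2:ℝ)^2) = 3/4 by norm_num, mul_pow]
      calc Real.pi * (((2:ℝ)^(k+1)*s)^2 - ((2:ℝ)^k*s)^2)
            * (Real.pi * ((((2:ℝ)^(k+1))⁻¹)^2 - (((2:ℝ)^(k+2))⁻¹)^2))
            * (Real.pi * ((1:ℝ)^2 - (1/2:ℝ)^2))^(n-2)
          = (Real.pi^2 * Real.pi^(n-2)) *
            ((((2:ℝ)^(k+1)*s)^2 - ((2:ℝ)^k*s)^2)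
              * ((((2:ℝ)^(k+1))⁻¹)^2 - (((2:ℝ)^(k+2))⁻¹)^2)) * (3/4:ℝ)^(n-2) := by
            rw [hπ34]; ring
        _ = Real.pi^n * (9/16) * (3/4:ℝ)^(n-2) * s^2 := by rw [hππ, hb1]; ring
    have hconst : ENNReal.ofReal (cl * (s ^ (2*A) * s^2))
        = ENNReal.ofReal l * volume (Set.pi Set.univ (B k)) := by
      rw [hvolB, ← ENNReal.ofReal_mul hl0.le]
      congr 1
      have hsplit : ((2:ℝ)^k*s)^(2*A) * (((2:ℝ)^(k+2))⁻¹)^(2*A)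
          = s^(2*A) * (1/4:ℝ)^(2*A) := by
        rw [← Real.mul_rpow (by positivity) (by positivity),
          show ((2:ℝ)^k*s) * (((2:ℝ)^(k+2))⁻¹) = s * (1/4) from by
            rw [pow_add]
            have h2k0 : ((2:ℝ)^k) ≠ 0 := ne_of_gt h2k
            field_simp
            ring,
          Real.mul_rpow hs.le (by norm_num)]
      rw [hl, hsplit, hcl]
      ring
    calc ENNReal.ofReal (cl * (s ^ (2*A) * s^2))
        = ENNReal.ofReal l * volume (Set.pi Set.univ (B k)) := hconst
      _ = ∫⁻ _ in Set.pi Set.univ (B k), ENNReal.ofReal l := (setLIntegral_const _ _).symm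
      _ ≤ ∫⁻ z in Set.pi Set.univ (B k), f z := setLIntegral_mono hfm hptL
  -- conclusion
  have hnn : (0:ℝ) ≤ cl * (s ^ (2*A) * s^2) :=
    mul_nonneg hcl0.le (mul_nonneg hsA.le (sq_nonneg s))
  have hnnU : (0:ℝ) ≤ Cu * (s ^ (2*A) * s^2) :=
    mul_nonneg hCu0.le (mul_nonneg hsA.le (sq_nonneg s))
  constructor
  · -- lower bound
    calc ENNReal.ofReal (cl / (4 * Real.log 2) * s ^ (2*A+2) * Real.log (1/s))
        ≤ ENNReal.ofReal ((N:ℝ) * (cl * (s ^ (2*A) * s^2))) := by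
          apply ENNReal.ofReal_le_ofReal
          rw [hspow]
          calc cl / (4*Real.log 2) * (s^(2*A)*s^2) * Real.log (1/s)
              = (Real.log (1/s) / (4*Real.log 2)) * (cl*(s^(2*A)*s^2)) := by ring
            _ ≤ (N:ℝ) * (cl*(s^(2*A)*s^2)) := by
                apply mul_le_mul_of_nonneg_right _ hnn
                rw [div_le_iff₀ (by linarith)]
                linarith
      _ = ∑ _k ∈ Finset.range N, ENNReal.ofReal (cl * (s ^ (2*A) * s^2)) := by
          rw [Finset.sum_const, Finset.card_range, nsmul_eq_mul,
            ENNReal.ofReal_mul (Nat.cast_nonneg N), ENNReal.ofReal_natCast]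
      _ ≤ ∑ k ∈ Finset.range N, ∫⁻ z in Set.pi Set.univ (B k), f z :=
          Finset.sum_le_sum fun k _ => hboxL k
      _ = ∫⁻ z in ⋃ k ∈ Finset.range N, Set.pi Set.univ (B k), f z :=
          (lintegral_biUnion_finset hBdisj (fun k _ => hBmeas k) f).symm
      _ ≤ ∫⁻ z in F, f z := lintegral_mono_set
          (Set.iUnion₂_subset fun k hk => hsubB k (Finset.mem_range.mp hk))
  · -- upper bound
    calc (∫⁻ z in F, f z)
        ≤ ∫⁻ z in ⋃ k ∈ Finset.range (N+1), Set.pi Set.univ (T k), f z :=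
          lintegral_mono_set hFsubset
      _ = ∑ k ∈ Finset.range (N+1), ∫⁻ z in Set.pi Set.univ (T k), f z :=
          lintegral_biUnion_finset hTdisj (fun k _ => hTmeas k) f
      _ ≤ ∑ _k ∈ Finset.range (N+1), ENNReal.ofReal (Cu * (s ^ (2*A) * s^2)) :=
          Finset.sum_le_sum fun k _ => hboxU k
      _ = ENNReal.ofReal (((N:ℝ)+1) * (Cu * (s ^ (2*A) * s^2))) := by
          rw [Finset.sum_const, Finset.card_range, nsmul_eq_mul,
            show ((N+1 : ℕ) : ℝ≥0∞) = ENNReal.ofReal ((N:ℝ)+1) from by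
              rw [← ENNReal.ofReal_natCast (N+1)]; congr 1; push_cast; ring,
            ← ENNReal.ofReal_mul (by positivity)]
      _ ≤ ENNReal.ofReal (Cu / Real.log 2 * s ^ (2*A+2) * Real.log (1/s)) := by
          apply ENNReal.ofReal_le_ofReal
          rw [hspow]
          calc ((N:ℝ)+1) * (Cu*(s^(2*A)*s^2))
              ≤ (Real.log (1/s) / Real.log 2) * (Cu*(s^(2*A)*s^2)) := by
                apply mul_le_mul_of_nonneg_right _ hnnU
                rw [le_div_iff₀ hlog2]
                linarith
            _ = Cu / Real.log 2 * (s^(2*A)*s^2) * Real.log (1/s) := by ring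



open MeasureTheory

theorem stmt19 (n : ℕ) (hn : 2 ≤ n) (α : Fin n → ℝ) (hα : ∀ j, 0 ≤ α j)
    (h01 : α ⟨0, by omega⟩ = α ⟨1, by omega⟩)
    (hmax : ∀ j, α j ≤ α ⟨0, by omega⟩) (hpos : 0 < α ⟨0, by omega⟩) :
    ∃ c C s₀ : ℝ, 0 < c ∧ 0 < C ∧ 0 < s₀ ∧ s₀ < 1/4 ∧
      ∀ s : ℝ, 0 < s → s < s₀ →
        ENNReal.ofReal (c * s ^ (2 * α ⟨0, by omega⟩ + 2) * Real.log (1/s)) ≤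
          (∫⁻ z in {z : Fin n → ℂ | (∀ j, ‖z j‖ < 1) ∧
              ‖z ⟨0, by omega⟩ * z ⟨1, by omega⟩‖ < s ∧
              s < ‖z ⟨0, by omega⟩‖ ∧
              ‖z ⟨0, by omega⟩‖ < Real.sqrt s},
            ENNReal.ofReal (∏ j, ‖z j‖ ^ (2 * α j))) ∧
        (∫⁻ z in {z : Fin n → ℂ | (∀ j, ‖z j‖ < 1) ∧
              ‖z ⟨0, by omega⟩ * z ⟨1, by omega⟩‖ < s ∧
              s < ‖z ⟨0, by omega⟩‖ ∧
              ‖z ⟨0, by omega⟩‖ < Real.sqrt s},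
            ENNReal.ofReal (∏ j, ‖z j‖ ^ (2 * α j))) ≤
          ENNReal.ofReal (C * s ^ (2 * α ⟨0, by omega⟩ + 2) * Real.log (1/s)) := by
  exact aux19 n hn ⟨0, by omega⟩ ⟨1, by omega⟩ (by simp [Fin.ext_iff]) α hα h01 hmax hpos
end
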